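/- Let G = (V, E, w) be a weighted directed graph with positive real edge weights and let H ⊆ TC(G), with each edge (u, v) ∈ H weighted dist_G(u, v). Then there exists a positive weight function w' on E ∪ H such that, in the weighted graph G' = (V, E ∪ H, w'), every pair (s, t) ∈ TC(G) has a unique minimum-w'-weight s–t path, and this unique path is also a minimum-weight s–t path of the weighted graph G ∪ H that uses exactly hopdist_{G∪H}(s, t) edges. -/

import Mathlib

open scoped Classical

abbrev Edge (n : ℕ) := Fin n × Fin n

def IsPathList {n : ℕ} (E : Set (Edge n)) (l : List (Fin n)) : Prop :=
  l.Nodup ∧ l.Chain' (fun a b => (a, b) ∈ E)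

def IsPathFromTo {n : ℕ} (E : Set (Edge n)) (u v : Fin n) (l : List (Fin n)) : Prop :=
  IsPathList E l ∧ l.head? = some u ∧ l.getLast? = some v

def TCrel {n : ℕ} (E : Set (Edge n)) (u v : Fin n) : Prop :=
  u ≠ v ∧ ∃ l : List (Fin n), IsPathFromTo E u v l

def TCset {n : ℕ} (E : Set (Edge n)) : Set (Edge n) := {p | TCrel E p.1 p.2}

/-- The total weight of a path `l` under the weight function `w`. -/
def pathWeight {n : ℕ} (w : Edge n → ℝ) (l : List (Fin n)) : ℝ :=
  ((l.zip l.tail).map w).sum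

/-- `l` is a minimum-weight directed path from `s` to `t`. -/
def IsMinWeightPath {n : ℕ} (E : Set (Edge n)) (w : Edge n → ℝ) (s t : Fin n)
    (l : List (Fin n)) : Prop :=
  IsPathFromTo E s t l ∧ ∀ l', IsPathFromTo E s t l' → pathWeight w l ≤ pathWeight w l'

/-- The weighted distance: minimum total weight of a directed `s`–`t` path. -/
noncomputable def wdist {n : ℕ} (E : Set (Edge n)) (w : Edge n → ℝ) (s t : Fin n) : ℝ :=
  sInf {r : ℝ | ∃ l, IsPathFromTo E s t l ∧ pathWeight w l = r}

/-- `hopdist E w s t`: the minimum number of edges among all minimum-weight `s`–`t` paths. -/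
noncomputable def hopdist {n : ℕ} (E : Set (Edge n)) (w : Edge n → ℝ) (s t : Fin n) : ℕ :=
  sInf {k : ℕ | ∃ l, IsMinWeightPath E w s t l ∧ l.length = k + 1}

/-- The weight function of `G ∪ H`: each hopset edge `(u,v) ∈ H` is weighted `dist_G(u,v)`;
all other edges keep their original weight. -/
noncomputable def unionWeight {n : ℕ} (E : Set (Edge n)) (w : Edge n → ℝ) (H : Set (Edge n)) :
    Edge n → ℝ :=
  fun e => if e ∈ H then wdist E w e.1 e.2 else w e

/-- `H ⊆ TC(G)` is an exact hopset with hopbound `β` for the weighted graph `(E, w)`. -/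
def IsExactHopset {n : ℕ} (E : Set (Edge n)) (w : Edge n → ℝ) (H : Set (Edge n)) (β : ℕ) :
    Prop :=
  H ⊆ TCset E ∧ ∀ p ∈ TCset E, hopdist (E ∪ H) (unionWeight E w H) p.1 p.2 ≤ β

/-- `exopt N M β`: the least `h` such that every weighted directed graph with at most `N`
vertices, at most `M` edges and positive real edge weights admits an exact hopset of size
at most `h` with hopbound at most `β`. -/
noncomputable def exopt (N M β : ℕ) : ℕ :=
  sInf {h : ℕ | ∀ n' : ℕ, n' ≤ N → ∀ (E : Set (Edge n')) (w : Edge n' → ℝ),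
    E.ncard ≤ M → (∀ e ∈ E, 0 < w e) →
    ∃ H : Set (Edge n'), H.ncard ≤ h ∧ IsExactHopset E w H β}

/-- The (weighted) potential `φ(H)`: the sum of `hopdist_{G∪H}(s,t)` over all pairs `(s,t)`
in the transitive closure of `G` with `hopdist_{G∪H}(s,t) ≥ β`. -/
noncomputable def wpotential {n : ℕ} (E : Set (Edge n)) (w : Edge n → ℝ) (H : Set (Edge n))
    (β : ℕ) : ℕ :=
  ∑ p : Edge n,
    if TCrel E p.1 p.2 ∧ β ≤ hopdist (E ∪ H) (unionWeight E w H) p.1 p.2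
    then hopdist (E ∪ H) (unionWeight E w H) p.1 p.2 else 0

/-- `Δ((u,v) | H) = φ(H) - φ(H ∪ {(u,v)})` for the weighted potential. -/
noncomputable def wdelta {n : ℕ} (E : Set (Edge n)) (w : Edge n → ℝ) (H : Set (Edge n))
    (β : ℕ) (e : Edge n) : ℕ :=
  wpotential E w H β - wpotential E w (H ∪ {e}) β

namespace PertAux

variable {α : Type*}

lemma chain'_pairs {R : α → α → Prop} :
    ∀ {l : List α}, l.Chain' R → ∀ p ∈ l.zip l.tail, R p.1 p.2 := by
  intro l
  induction l with
  | nil => intro _ p hp; simp at hp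
  | cons a t ih =>
    intro hc p hp
    cases t with
    | nil => simp at hp
    | cons b r =>
      simp only [List.Chain', List.isChain_cons_cons] at hc
      simp only [List.tail_cons, List.zip_cons_cons, List.mem_cons] at hp
      rcases hp with rfl | hp
      · exact hc.1
      · exact ih hc.2 p hp

lemma mem_edges_fst {l : List α} {p : α × α} (hp : p ∈ l.zip l.tail) : p.1 ∈ l := by
  obtain ⟨a, b⟩ := p
  exact (List.of_mem_zip hp).1

lemma edges_nodup : ∀ {l : List α}, l.Nodup → (l.zip l.tail).Nodup := by
  intro l
  induction l with
  | nil => intro _; simp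
  | cons a t ih =>
    intro h
    cases t with
    | nil => simp
    | cons b r =>
      simp only [List.tail_cons, List.zip_cons_cons]
      rw [List.nodup_cons] at h ⊢
      refine ⟨fun hm => h.1 ?_, ih h.2⟩
      have := mem_edges_fst hm
      simpa using this

lemma head?_tail_of_edge {l : List α} (h : l.Nodup) {a x : α}
    (hh : l.head? = some a) (hm : (a, x) ∈ l.zip l.tail) : l.tail.head? = some x := by
  cases l with
  | nil => simp at hh
  | cons a' t =>
    simp only [List.head?_cons, Option.some_inj] at hh
    subst hh
    cases t with
    | nil => simp at hm
    | cons b r =>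
      simp only [List.tail_cons, List.zip_cons_cons, List.mem_cons] at hm ⊢
      rcases hm with hm | hm
      · simp [Prod.ext_iff] at hm; simp [hm]
      · exfalso
        have := mem_edges_fst hm
        rw [List.nodup_cons] at h
        exact h.1 (by simpa using this)

lemma eq_of_edges_toFinset_eq [DecidableEq α] :
    ∀ (l₁ l₂ : List α), l₁.Nodup → l₂.Nodup →
      l₁.head? = l₂.head? → l₁.getLast? = l₂.getLast? →
      (l₁.zip l₁.tail).toFinset = (l₂.zip l₂.tail).toFinset → l₁ = l₂ := by
  intro l₁
  induction l₁ with
  | nil =>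
    intro l₂ _ _ hh _ _
    cases l₂ with
    | nil => rfl
    | cons b t => simp at hh
  | cons s t₁ ih =>
    intro l₂ h₁ h₂ hh hl he
    cases l₂ with
    | nil => simp at hh
    | cons s' t₂ =>
      simp only [List.head?_cons, Option.some_inj] at hh
      subst hh
      cases t₁ with
      | nil =>
        cases t₂ with
        | nil => rfl
        | cons b r₂ =>
          exfalso
          simp only [List.tail_cons, List.zip_nil_right, List.zip_cons_cons] at he
          rw [List.toFinset_nil, eq_comm, List.toFinset_eq_empty_iff] at he
          simp at he
      | cons b r₁ =>
        have hsb : (s, b) ∈ (s :: t₂).zip (s :: t₂).tail := by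
          rw [← List.mem_toFinset, ← he]
          simp
        have ht₂ : t₂.head? = some b := head?_tail_of_edge h₂ (by simp) hsb
        cases t₂ with
        | nil => simp at ht₂
        | cons c r₂ =>
          simp only [List.head?_cons, Option.some_inj] at ht₂
          -- ht₂ : c = b
          cases ht₂
          have hnm₁ : (s, b) ∉ ((b :: r₁).zip r₁) := fun hm => by
            rw [List.nodup_cons] at h₁
            exact h₁.1 (mem_edges_fst (l := b :: r₁) (by simpa using hm))
          have hnm₂ : (s, b) ∉ ((b :: r₂).zip r₂) := fun hm => by
            rw [List.nodup_cons] at h₂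
            exact h₂.1 (mem_edges_fst (l := b :: r₂) (by simpa using hm))
          simp only [List.tail_cons, List.zip_cons_cons, List.toFinset_cons] at he
          have he' : ((b :: r₁).zip r₁).toFinset = ((b :: r₂).zip r₂).toFinset := by
            have e1 := congrArg (fun S => Finset.erase S (s, b)) he
            rwa [Finset.erase_insert (fun h => hnm₁ (List.mem_toFinset.mp h)),
                 Finset.erase_insert (fun h => hnm₂ (List.mem_toFinset.mp h))] at e1
          have htail := ih (b :: r₂) (List.nodup_cons.mp h₁).2 (List.nodup_cons.mp h₂).2
            (by simp)
            (by rwa [List.getLast?_cons_cons, List.getLast?_cons_cons] at hl)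
            (by simpa using he')
          rw [htail]

lemma sum_map_add {β : Type*} (L : List β) (u v : β → ℝ) :
    (L.map (fun e => u e + v e)).sum = (L.map u).sum + (L.map v).sum := by
  induction L with
  | nil => simp
  | cons a L ih => simp [ih]; ring

end PertAux


section PertAuxExtra

open PertAux

lemma PertAux.sum_map_nonneg {β : Type*} (L : List β) (u : β → ℝ)
    (h : ∀ e ∈ L, 0 ≤ u e) : 0 ≤ (L.map u).sum :=
  List.sum_nonneg (by
    intro x hx
    obtain ⟨e, he, rfl⟩ := List.mem_map.mp hx
    exact h e he)

lemma PertAux.sum_map_div {β : Type*} (L : List β) (u : β → ℝ) (c : ℝ) :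
    (L.map (fun e => u e / c)).sum = (L.map u).sum / c := by
  induction L with
  | nil => simp
  | cons a L ih => simp [ih, add_div]

lemma PertAux.sum_map_decomp {β : Type*} (L : List β) (Wf εf : β → ℝ) (δ : ℝ) :
    (L.map (fun e => Wf e + δ * (1 + εf e))).sum
      = (L.map Wf).sum + δ * ((L.length : ℝ) + (L.map εf).sum) := by
  induction L with
  | nil => simp
  | cons a L ih => simp only [List.map_cons, List.sum_cons, ih, List.length_cons]; push_cast; ring

lemma PertAux.twoPowSumReal_inj {S T : Finset ℕ}
    (h : ∑ i ∈ S, (2:ℝ)^i = ∑ i ∈ T, (2:ℝ)^i) : S = T := by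
  have hn : (∑ i ∈ S, 2^i : ℕ) = (∑ i ∈ T, 2^i : ℕ) := by
    have h2 : ((∑ i ∈ S, 2^i : ℕ) : ℝ) = ((∑ i ∈ T, 2^i : ℕ) : ℝ) := by
      push_cast
      exact h
    exact_mod_cast h2
  exact Finset.geomSum_injective le_rfl hn

lemma PertAux.nat_le_of_add_frac {a b : ℕ} {x y : ℝ} (hx : 0 ≤ x) (hy1 : y < 1)
    (h : (a:ℝ) + x ≤ (b:ℝ) + y) : a ≤ b := by
  by_contra hc
  push_neg at hc
  have hba : (b:ℝ) + 1 ≤ a := by exact_mod_cast hc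
  linarith

lemma PertAux.nodup_finite (n : ℕ) : {l : List (Fin n) | l.Nodup}.Finite := by
  apply (List.finite_length_le (Fin n) n).subset
  intro l hl
  exact (List.Nodup.length_le_card hl).trans (le_of_eq (Fintype.card_fin n))

end PertAuxExtra

/-- **perturbation.** Let `G = (V, E, w)` be a weighted directed graph with
positive real edge weights and `H ⊆ TC(G)` (each edge `(u,v) ∈ H` weighted
`dist_G(u,v)`). Then there is a positive weight function `w'` on `E ∪ H` such that in
`G' = (V, E ∪ H, w')` every pair `(s,t) ∈ TC(G)` has a unique minimum-`w'`-weight `s`–`t`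
path, and this unique path is also a minimum-weight `s`–`t` path of `G ∪ H` using exactly
`hopdist_{G∪H}(s,t)` edges. -/
theorem perturbation_unique_shortest_paths :
    ∀ (n : ℕ) (E : Set (Edge n)) (w : Edge n → ℝ), (∀ e ∈ E, 0 < w e) →
      ∀ H : Set (Edge n), H ⊆ TCset E →
        ∃ w' : Edge n → ℝ, (∀ e ∈ E ∪ H, 0 < w' e) ∧
          ∀ p ∈ TCset E, ∃ l : List (Fin n),
            IsMinWeightPath (E ∪ H) w' p.1 p.2 l ∧
            (∀ l' : List (Fin n), IsMinWeightPath (E ∪ H) w' p.1 p.2 l' → l' = l) ∧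
            IsMinWeightPath (E ∪ H) (unionWeight E w H) p.1 p.2 l ∧
            l.length = hopdist (E ∪ H) (unionWeight E w H) p.1 p.2 + 1 := by
  intro n E w hw H hH
  classical
  set EH : Set (Edge n) := E ∪ H with hEHdef
  set W : Edge n → ℝ := unionWeight E w H with hWdef
  -- W is nonnegative on EH
  have hWnonneg : ∀ e ∈ EH, 0 ≤ W e := by
    intro e he
    show (0:ℝ) ≤ unionWeight E w H e
    by_cases heH : e ∈ H
    · simp only [unionWeight, if_pos heH]
      apply Real.sInf_nonneg
      rintro r ⟨l, hl, rfl⟩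
      apply PertAux.sum_map_nonneg
      intro q hq
      have hqE := PertAux.chain'_pairs hl.1.2 q hq
      rw [Prod.mk.eta] at hqE
      exact le_of_lt (hw q hqE)
    · have heE : e ∈ E := he.resolve_right heH
      simp only [unionWeight, if_neg heH]
      exact le_of_lt (hw e heE)
  -- encoding of edges
  set enc : Edge n → ℕ := fun e => ((finProdFinEquiv e : Fin (n*n)) : ℕ) with hencdef
  have enc_inj : Function.Injective enc := by
    intro a b hab
    exact finProdFinEquiv.injective (Fin.val_injective hab)
  have enc_lt : ∀ e : Edge n, enc e < n*n := fun e => (finProdFinEquiv e).isLt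
  set T : ℝ := (2:ℝ)^(n*n) with hTdef
  have hTpos : 0 < T := by rw [hTdef]; positivity
  set ε : Edge n → ℝ := fun e => (2:ℝ)^(enc e) / T with hεdef
  have hεnonneg : ∀ e, 0 ≤ ε e := by
    intro e
    show (0:ℝ) ≤ (2:ℝ)^(enc e) / T
    positivity
  have key_eps : ∀ l : List (Fin n), l.Nodup →
      ((l.zip l.tail).map ε).sum
        = (∑ k ∈ ((l.zip l.tail).toFinset.image enc), (2:ℝ)^k) / T := by
    intro l hl
    rw [Finset.sum_image (fun a _ b _ hab => enc_inj hab),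
      List.sum_toFinset _ (PertAux.edges_nodup hl), hεdef,
      PertAux.sum_map_div]
  have eps_lt_one : ∀ l : List (Fin n), l.Nodup → ((l.zip l.tail).map ε).sum < 1 := by
    intro l hl
    rw [key_eps l hl, div_lt_one hTpos]
    calc (∑ k ∈ ((l.zip l.tail).toFinset.image enc), (2:ℝ)^k)
        ≤ ∑ k ∈ Finset.range (n*n), (2:ℝ)^k := by
          apply Finset.sum_le_sum_of_subset_of_nonneg
          · intro k hk
            obtain ⟨e, _, rfl⟩ := Finset.mem_image.mp hk
            exact Finset.mem_range.mpr (enc_lt e)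
          · intro k _ _; positivity
      _ = (2:ℝ)^(n*n) - 1 := by
          rw [geom_sum_eq (by norm_num : (2:ℝ) ≠ 1)]; norm_num
      _ < T := by rw [hTdef]; linarith
  have eps_inj : ∀ l₁ l₂ : List (Fin n), l₁.Nodup → l₂.Nodup →
      l₁.head? = l₂.head? → l₁.getLast? = l₂.getLast? →
      ((l₁.zip l₁.tail).map ε).sum = ((l₂.zip l₂.tail).map ε).sum → l₁ = l₂ := by
    intro l₁ l₂ h1 h2 hh hl hsum
    rw [key_eps _ h1, key_eps _ h2, div_eq_div_iff hTpos.ne' hTpos.ne'] at hsum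
    have hsums := mul_right_cancel₀ (ne_of_gt hTpos) hsum
    have himg := PertAux.twoPowSumReal_inj hsums
    have hfin := Finset.image_injective enc_inj himg
    exact PertAux.eq_of_edges_toFinset_eq l₁ l₂ h1 h2 hh hl hfin
  -- global gap γ
  have hLfin : {l : List (Fin n) | l.Nodup}.Finite := PertAux.nodup_finite n
  set F : Finset (List (Fin n)) := hLfin.toFinset with hFdef
  have hFmem : ∀ {l : List (Fin n)}, l ∈ F ↔ l.Nodup := by
    intro l; rw [hFdef, Set.Finite.mem_toFinset]; exact Iff.rfl
  set DF : Finset ℝ :=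
    (((F.image (pathWeight W)) ×ˢ (F.image (pathWeight W))).image
      (fun q => q.1 - q.2)).filter (fun d => 0 < d) with hDFdef
  set γ : ℝ := if hD : DF.Nonempty then DF.min' hD else 1 with hγdef
  have hγpos : 0 < γ := by
    rw [hγdef]; split_ifs with hD
    · exact (Finset.mem_filter.mp (DF.min'_mem hD)).2
    · norm_num
  have hγle : ∀ l₁ ∈ F, ∀ l₂ ∈ F, pathWeight W l₂ < pathWeight W l₁ →
      γ ≤ pathWeight W l₁ - pathWeight W l₂ := by
    intro l₁ h1 l₂ h2 hlt
    have hmem : pathWeight W l₁ - pathWeight W l₂ ∈ DF := by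
      refine Finset.mem_filter.mpr ⟨Finset.mem_image.mpr ⟨(pathWeight W l₁, pathWeight W l₂),
        Finset.mem_product.mpr ⟨Finset.mem_image_of_mem _ h1, Finset.mem_image_of_mem _ h2⟩,
        rfl⟩, by linarith⟩
    rw [hγdef, dif_pos ⟨_, hmem⟩]
    exact DF.min'_le _ hmem
  set δ : ℝ := γ / (n+1) with hδdef
  have hδpos : 0 < δ := by
    rw [hδdef]; positivity
  have hδγ : δ * ((n:ℝ)+1) = γ := by
    rw [hδdef]; field_simp
  set g : List (Fin n) → ℝ :=
    fun x => ((x.zip x.tail).length : ℝ) + ((x.zip x.tail).map ε).sum with hgdef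
  have hgl : ∀ x : List (Fin n),
      g x = ((x.zip x.tail).length : ℝ) + ((x.zip x.tail).map ε).sum := fun _ => rfl
  set w' : Edge n → ℝ := fun e => W e + δ * (1 + ε e) with hw'def
  have decomp : ∀ x : List (Fin n), pathWeight w' x = pathWeight W x + δ * g x := by
    intro x
    rw [hgl]
    show ((x.zip x.tail).map (fun e => W e + δ * (1 + ε e))).sum = _
    simp only [pathWeight]
    exact PertAux.sum_map_decomp _ _ _ _
  refine ⟨w', ?_, ?_⟩
  · intro e he
    have h1 := hWnonneg e he
    have h2 := hεnonneg e
    show (0:ℝ) < W e + δ * (1 + ε e)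
    nlinarith
  intro p hp
  obtain ⟨hne, lE, hlE⟩ := hp
  have hn : 0 < n := p.1.pos
  have hlEH : IsPathFromTo EH p.1 p.2 lE :=
    ⟨⟨hlE.1.1, hlE.1.2.imp (fun a b hab => Set.mem_union_left H hab)⟩, hlE.2⟩
  set P : Finset (List (Fin n)) := F.filter (fun l => IsPathFromTo EH p.1 p.2 l) with hPdef
  have hmemP : ∀ {l : List (Fin n)}, l ∈ P ↔ IsPathFromTo EH p.1 p.2 l := by
    intro l
    rw [hPdef, Finset.mem_filter]
    exact ⟨fun h => h.2, fun h => ⟨hFmem.mpr h.1.1, h⟩⟩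
  have hPF : ∀ {l : List (Fin n)}, l ∈ P → l ∈ F := by
    intro l hl; rw [hPdef] at hl; exact (Finset.mem_filter.mp hl).1
  have hPne : P.Nonempty := ⟨lE, hmemP.mpr hlEH⟩
  obtain ⟨l₀, hl₀P, hl₀min⟩ := P.exists_min_image (pathWeight W) hPne
  set Q : Finset (List (Fin n)) := P.filter (fun l => pathWeight W l = pathWeight W l₀) with hQdef
  have hQne : Q.Nonempty := ⟨l₀, by rw [hQdef, Finset.mem_filter]; exact ⟨hl₀P, rfl⟩⟩
  obtain ⟨l, hlQ, hlmin⟩ := Q.exists_min_image g hQne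
  rw [hQdef, Finset.mem_filter] at hlQ
  obtain ⟨hlP, hlW⟩ := hlQ
  have hlpath : IsPathFromTo EH p.1 p.2 l := hmemP.mp hlP
  -- basic length facts
  have hlenP : ∀ x : List (Fin n), x ∈ P → x ≠ [] ∧ x.length ≤ n ∧
      (x.zip x.tail).length = x.length - 1 := by
    intro x hx
    have hx' := hmemP.mp hx
    have hne' : x ≠ [] := by
      intro h; rw [h] at hx'; simp [IsPathFromTo] at hx'
    refine ⟨hne', (List.Nodup.length_le_card hx'.1.1).trans (le_of_eq (Fintype.card_fin n)), ?_⟩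
    rw [List.length_zip, List.length_tail]
    omega
  have hgnonneg : ∀ x : List (Fin n), 0 ≤ g x := by
    intro x
    rw [hgl]
    have := PertAux.sum_map_nonneg (x.zip x.tail) ε (fun e _ => hεnonneg e)
    positivity
  have hglt : ∀ x : List (Fin n), x ∈ P → g x < n := by
    intro x hx
    obtain ⟨hne', hlen, hzip⟩ := hlenP x hx
    have h1 : ((x.zip x.tail).length : ℝ) ≤ (n:ℝ) - 1 := by
      have h0 : (x.zip x.tail).length + 1 ≤ n := by omega
      have h0' := (Nat.cast_le (α := ℝ)).mpr h0
      push_cast at h0'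
      linarith
    have h2 := eps_lt_one x (hmemP.mp hx).1.1
    rw [hgl]
    linarith
  -- the strict-minimality key
  have key : ∀ x : List (Fin n), x ∈ P → x ≠ l → pathWeight w' l < pathWeight w' x := by
    intro x hxP hxne
    have hxpath := hmemP.mp hxP
    rw [decomp, decomp]
    by_cases hxQ : x ∈ Q
    · have hxW : pathWeight W x = pathWeight W l := by
        rw [hQdef, Finset.mem_filter] at hxQ
        rw [hxQ.2, hlW]
      have hgle : g l ≤ g x := hlmin x hxQ
      have hgne : g l ≠ g x := by
        intro hg
        apply hxne
        rw [hgl l, hgl x] at hg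
        have e1 : (l.zip l.tail).length ≤ (x.zip x.tail).length :=
          PertAux.nat_le_of_add_frac
            (PertAux.sum_map_nonneg _ _ (fun e _ => hεnonneg e))
            (eps_lt_one x hxpath.1.1) (le_of_eq hg)
        have e2 : (x.zip x.tail).length ≤ (l.zip l.tail).length :=
          PertAux.nat_le_of_add_frac
            (PertAux.sum_map_nonneg _ _ (fun e _ => hεnonneg e))
            (eps_lt_one l hlpath.1.1) (le_of_eq hg.symm)
        have e3 : (l.zip l.tail).length = (x.zip x.tail).length := le_antisymm e1 e2
        have e3' : ((l.zip l.tail).length : ℝ) = ((x.zip x.tail).length : ℝ) := by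
          exact_mod_cast e3
        have e4 : ((l.zip l.tail).map ε).sum = ((x.zip x.tail).map ε).sum := by
          linarith
        exact eps_inj x l hxpath.1.1 hlpath.1.1
          (hxpath.2.1.trans hlpath.2.1.symm)
          (hxpath.2.2.trans hlpath.2.2.symm) e4.symm
      have hglt' : g l < g x := lt_of_le_of_ne hgle hgne
      have hmul := mul_lt_mul_of_pos_left hglt' hδpos
      rw [hxW]
      linarith
    · have hxWne : pathWeight W x ≠ pathWeight W l₀ := by
        intro h
        exact hxQ (by rw [hQdef, Finset.mem_filter]; exact ⟨hxP, h⟩)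
      have hxWgt : pathWeight W l < pathWeight W x := by
        have h1 := hl₀min x hxP
        rw [hlW]
        exact lt_of_le_of_ne h1 (Ne.symm hxWne)
      have hgap := hγle x (hPF hxP) l (hPF hlP) hxWgt
      have hδl : δ * g l < γ := by
        have h1 : g l < (n:ℝ) + 1 := by
          have := hglt l hlP
          linarith
        calc δ * g l < δ * ((n:ℝ)+1) := (mul_lt_mul_iff_right₀ hδpos).mpr h1
          _ = γ := hδγ
      have h2 : (0:ℝ) ≤ δ * g x := mul_nonneg (le_of_lt hδpos) (hgnonneg x)
      linarith
  refine ⟨l, ⟨hlpath, ?_⟩, ?_, ⟨hlpath, ?_⟩, ?_⟩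
  · -- min for w'
    intro l' hl'
    rcases eq_or_ne l' l with rfl | hne'
    · exact le_rfl
    · exact le_of_lt (key l' (hmemP.mpr hl') hne')
  · -- uniqueness
    intro l' hl'
    by_contra hne'
    have h1 := key l' (hmemP.mpr hl'.1) hne'
    have h2 := hl'.2 l hlpath
    linarith
  · -- min for W
    intro l' hl'
    rw [hlW]
    exact hl₀min l' (hmemP.mpr hl')
  · -- length equals hopdist + 1
    have hlen1 : 1 ≤ l.length := List.length_pos_iff.mpr (hlenP l hlP).1
    have hmemS : (l.length - 1) ∈
        {k : ℕ | ∃ l', IsMinWeightPath EH W p.1 p.2 l' ∧ l'.length = k + 1} := by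
      refine ⟨l, ⟨hlpath, ?_⟩, ?_⟩
      · intro l' hl'
        rw [hlW]
        exact hl₀min l' (hmemP.mpr hl')
      · omega
    have hub := Nat.sInf_le hmemS
    have hlb : l.length - 1 ≤
        sInf {k : ℕ | ∃ l', IsMinWeightPath EH W p.1 p.2 l' ∧ l'.length = k + 1} := by
      obtain ⟨l₃, hl₃min, hl₃len⟩ := Nat.sInf_mem (Set.nonempty_of_mem hmemS)
      have hl₃P : l₃ ∈ P := hmemP.mpr hl₃min.1
      have hl₃W : pathWeight W l₃ = pathWeight W l₀ :=
        le_antisymm (hl₃min.2 l₀ (hmemP.mp hl₀P)) (hl₀min l₃ hl₃P)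
      have hl₃Q : l₃ ∈ Q := by
        rw [hQdef, Finset.mem_filter]; exact ⟨hl₃P, hl₃W⟩
      have hgle := hlmin l₃ hl₃Q
      rw [hgl l, hgl l₃] at hgle
      have e1 : (l.zip l.tail).length ≤ (l₃.zip l₃.tail).length :=
        PertAux.nat_le_of_add_frac
          (PertAux.sum_map_nonneg _ _ (fun e _ => hεnonneg e))
          (eps_lt_one l₃ hl₃min.1.1.1) hgle
      have z1 := (hlenP l hlP).2.2
      have z3 := (hlenP l₃ hl₃P).2.2
      omega
    rw [hopdist]
    omega
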